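/- Assume each Markov kernel M_j is reversible with respect to Π_j and ρ_j := ‖Π_{j-1}/Π_j‖_∞ < ∞. Then the kernel Q_j defines a bounded operator on L²(Π_{j-1}) with ∫ (Q_j f)² dΠ_{j-1} ≤ ρ_j² Π_{j-1}(f²), and Q_j is self-adjoint: for all f, h ∈ L²(Π_{j-1}), ⟨f, Q_j h⟩_{j-1} = ⟨h, Q_j f⟩_{j-1}. -/

import Mathlib

open MeasureTheory ProbabilityTheory
open scoped ENNReal NNReal

/-- Reversibility of a kernel `M` with respect to a measure `π` (detailed balance). -/
def IsReversible {Θ : Type*} [MeasurableSpace Θ] (M : Kernel Θ Θ) (π : Measure Θ) : Prop :=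
  ∀ A B : Set Θ, MeasurableSet A → MeasurableSet B →
    ∫⁻ x in A, M x B ∂π = ∫⁻ x in B, M x A ∂π

/-- The operator induced by the finite kernel `Q_j`:
`Q f(x) = ∫ M(x,dy) ∫ M(y,dz) f(z) r(z)` where `r = Π_{j-1}/Π_j`. -/
noncomputable def Qop {Θ : Type*} [MeasurableSpace Θ] (M : Kernel Θ Θ) (r : Θ → ℝ)
    (f : Θ → ℝ) (x : Θ) : ℝ :=
  ∫ y, (∫ z, f z * r z ∂(M y)) ∂(M x)

section Aux

open scoped ENNReal

variable {Θ : Type*} [MeasurableSpace Θ]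

lemma lint_sq_lt_top_iff_memℒp {μ : Measure Θ} {v : Θ → ℝ} (hv : Measurable v) :
    MemLp v 2 μ ↔ ∫⁻ x, ENNReal.ofReal ((v x) ^ 2) ∂μ < ⊤ := by
  rw [memLp_two_iff_integrable_sq hv.aestronglyMeasurable]
  constructor
  · intro h2
    have := h2.hasFiniteIntegral
    rwa [hasFiniteIntegral_iff_ofReal (Filter.Eventually.of_forall fun x => sq_nonneg _)] at this
  · intro h2
    refine ⟨(hv.pow_const 2).aestronglyMeasurable, ?_⟩
    rwa [hasFiniteIntegral_iff_ofReal (Filter.Eventually.of_forall fun x => sq_nonneg _)]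

/-- Cauchy-Schwarz/Jensen on a probability measure, in `ℝ≥0∞` form (no integrability needed). -/
lemma sq_integral_le (μ : Measure Θ) [IsProbabilityMeasure μ] {g : Θ → ℝ} (hg : Measurable g) :
    ENNReal.ofReal ((∫ z, g z ∂μ) ^ 2) ≤ ∫⁻ z, ENNReal.ofReal ((g z) ^ 2) ∂μ := by
  by_cases hL : MemLp g 2 μ
  · have hsq : Integrable (fun x => g x ^ 2) μ := hL.integrable_sq
    have hvar := variance_nonneg g μ
    rw [variance_eq_sub hL] at hvar
    have h2 : (∫ z, g z ∂μ) ^ 2 ≤ ∫ z, g z ^ 2 ∂μ := by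
      have hpow : μ[g ^ 2] = ∫ z, g z ^ 2 ∂μ := by
        congr 1
      have hμg : μ[g] = ∫ z, g z ∂μ := rfl
      nlinarith [hvar]
    calc ENNReal.ofReal ((∫ z, g z ∂μ) ^ 2) ≤ ENNReal.ofReal (∫ z, g z ^ 2 ∂μ) :=
          ENNReal.ofReal_le_ofReal h2
      _ = ∫⁻ z, ENNReal.ofReal ((g z) ^ 2) ∂μ :=
          ofReal_integral_eq_lintegral_ofReal hsq (Filter.Eventually.of_forall fun _ => sq_nonneg _)
  · have htop : ∫⁻ z, ENNReal.ofReal ((g z) ^ 2) ∂μ = ⊤ := by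
      by_contra hc
      exact hL ((lint_sq_lt_top_iff_memℒp hg).2 (lt_top_iff_ne_top.2 hc))
    simp [htop]

variable (πcur : Measure Θ) [IsProbabilityMeasure πcur]
  (M : Kernel Θ Θ) [IsMarkovKernel M]

lemma compProd_map_swap (hrev : IsReversible M πcur) :
    (πcur ⊗ₘ M).map Prod.swap = πcur ⊗ₘ M := by
  haveI : IsProbabilityMeasure ((πcur ⊗ₘ M).map Prod.swap) :=
    Measure.isProbabilityMeasure_map measurable_swap.aemeasurable
  refine ext_of_generate_finite _ generateFrom_prod.symm isPiSystem_prod ?_ ?_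
  · rintro s ⟨A, hA, B, hB, rfl⟩
    rw [Measure.map_apply measurable_swap (hA.prod hB), Set.preimage_swap_prod,
      Measure.compProd_apply_prod hB hA, Measure.compProd_apply_prod hA hB]
    exact hrev B A hB hA
  · simp

lemma lintegral_swap_kernel (hrev : IsReversible M πcur) {F : Θ × Θ → ℝ≥0∞}
    (hF : Measurable F) :
    ∫⁻ x, ∫⁻ y, F (x, y) ∂(M x) ∂πcur = ∫⁻ x, ∫⁻ y, F (y, x) ∂(M x) ∂πcur := by
  have h1 : ∫⁻ p, F p ∂(πcur ⊗ₘ M) = ∫⁻ x, ∫⁻ y, F (x, y) ∂(M x) ∂πcur :=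
    Measure.lintegral_compProd hF
  have h2 : ∫⁻ p, F p.swap ∂(πcur ⊗ₘ M) = ∫⁻ x, ∫⁻ y, F (y, x) ∂(M x) ∂πcur :=
    Measure.lintegral_compProd (hF.comp measurable_swap)
  calc ∫⁻ x, ∫⁻ y, F (x, y) ∂(M x) ∂πcur
      = ∫⁻ p, F p ∂(πcur ⊗ₘ M) := h1.symm
    _ = ∫⁻ p, F p ∂((πcur ⊗ₘ M).map Prod.swap) := by
        rw [compProd_map_swap πcur M hrev]
    _ = ∫⁻ p, F p.swap ∂(πcur ⊗ₘ M) := lintegral_map hF measurable_swap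
    _ = ∫⁻ x, ∫⁻ y, F (y, x) ∂(M x) ∂πcur := h2

lemma lintegral_invariant (hrev : IsReversible M πcur) {g : Θ → ℝ≥0∞} (hg : Measurable g) :
    ∫⁻ x, ∫⁻ y, g y ∂(M x) ∂πcur = ∫⁻ x, g x ∂πcur := by
  have := lintegral_swap_kernel πcur M hrev (F := fun p => g p.2) (hg.comp measurable_snd)
  simpa using this

lemma measurable_Tint {v : Θ → ℝ} (hv : Measurable v) :
    Measurable fun x => ∫ y, v y ∂(M x) :=
  (MeasureTheory.StronglyMeasurable.integral_kernel_prod_right (κ := M)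
    (f := fun _ y => v y)
    ((hv.comp measurable_snd).stronglyMeasurable :
      StronglyMeasurable (Function.uncurry fun _ y => v y))).measurable

lemma lint_Tsq_le (hrev : IsReversible M πcur) {v : Θ → ℝ} (hv : Measurable v) :
    ∫⁻ x, ENNReal.ofReal ((∫ y, v y ∂(M x)) ^ 2) ∂πcur
      ≤ ∫⁻ x, ENNReal.ofReal ((v x) ^ 2) ∂πcur := by
  refine le_trans (lintegral_mono fun x => sq_integral_le (M x) hv) ?_
  exact le_of_eq (lintegral_invariant πcur M hrev (hv.pow_const 2).ennreal_ofReal)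

lemma adj_step (hrev : IsReversible M πcur) {u v : Θ → ℝ}
    (hu : Measurable u) (hv : Measurable v)
    (hu2 : MemLp u 2 πcur) (hv2 : MemLp v 2 πcur) :
    ∫ x, u x * (∫ y, v y ∂(M x)) ∂πcur = ∫ x, v x * (∫ y, u y ∂(M x)) ∂πcur := by
  have key : ∀ (a b : Θ → ℝ), Measurable a → Measurable b → MemLp a 2 πcur →
      MemLp b 2 πcur → Integrable (fun p : Θ × Θ => a p.1 * b p.2) (πcur ⊗ₘ M) := by
    intro a b ha hb ha2 hb2
    have ha' : MemLp (fun p : Θ × Θ => a p.1) 2 (πcur ⊗ₘ M) := by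
      rw [lint_sq_lt_top_iff_memℒp (show Measurable fun p : Θ × Θ => a p.1 from ha.comp measurable_fst),
        Measure.lintegral_compProd (show Measurable fun p : Θ × Θ => ENNReal.ofReal (a p.1 ^ 2) from ((ha.comp measurable_fst).pow_const 2).ennreal_ofReal)]
      simp only [lintegral_const, measure_univ, mul_one]
      exact (lint_sq_lt_top_iff_memℒp ha).1 ha2
    have hb' : MemLp (fun p : Θ × Θ => b p.2) 2 (πcur ⊗ₘ M) := by
      rw [lint_sq_lt_top_iff_memℒp (show Measurable fun p : Θ × Θ => b p.2 from hb.comp measurable_snd),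
        Measure.lintegral_compProd (show Measurable fun p : Θ × Θ => ENNReal.ofReal (b p.2 ^ 2) from ((hb.comp measurable_snd).pow_const 2).ennreal_ofReal),
        lintegral_invariant πcur M hrev (hb.pow_const 2).ennreal_ofReal]
      exact (lint_sq_lt_top_iff_memℒp hb).1 hb2
    have hmul := hb'.smul (φ := fun p : Θ × Θ => a p.1) ha'
      (r := 1)
    rw [memLp_one_iff_integrable] at hmul
    exact hmul
  have h1 : Integrable (fun p : Θ × Θ => u p.1 * v p.2) (πcur ⊗ₘ M) := key u v hu hv hu2 hv2
  have h2 : Integrable (fun p : Θ × Θ => v p.1 * u p.2) (πcur ⊗ₘ M) := key v u hv hu hv2 hu2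
  have e1 : ∫ p : Θ × Θ, u p.1 * v p.2 ∂(πcur ⊗ₘ M)
      = ∫ x, u x * (∫ y, v y ∂(M x)) ∂πcur := by
    rw [Measure.integral_compProd h1]
    simp_rw [integral_const_mul]
  have e3 : ∫ p : Θ × Θ, v p.1 * u p.2 ∂(πcur ⊗ₘ M)
      = ∫ x, v x * (∫ y, u y ∂(M x)) ∂πcur := by
    rw [Measure.integral_compProd h2]
    simp_rw [integral_const_mul]
  have e2 : ∫ p : Θ × Θ, u p.1 * v p.2 ∂(πcur ⊗ₘ M)
      = ∫ p : Θ × Θ, v p.1 * u p.2 ∂(πcur ⊗ₘ M) := by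
    conv_lhs => rw [← compProd_map_swap πcur M hrev]
    rw [integral_map measurable_swap.aemeasurable
      (Measurable.aestronglyMeasurable
        (show Measurable fun p : Θ × Θ => u p.1 * v p.2 from
          (hu.comp measurable_fst).mul (hv.comp measurable_snd)))]
    simp only [Prod.fst_swap, Prod.snd_swap]
    simp_rw [mul_comm]
  rw [← e1, e2, e3]

lemma integral_withDensity_ofReal {μ : Measure Θ} {r : Θ → ℝ} (hrmeas : Measurable r)
    (hrnonneg : ∀ z, 0 ≤ r z) (w : Θ → ℝ) :
    ∫ x, w x ∂(μ.withDensity fun z => ENNReal.ofReal (r z)) = ∫ x, r x * w x ∂μ := by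
  rw [show (fun z => ENNReal.ofReal (r z)) = (fun z => ((r z).toNNReal : ℝ≥0∞)) from rfl,
    integral_withDensity_eq_integral_smul hrmeas.real_toNNReal w]
  congr 1
  funext x
  simp [NNReal.smul_def, Real.coe_toNNReal _ (hrnonneg x)]

end Aux

/- STATEMENT 5: Under reversibility of `M_j` w.r.t. `Π_j` and `ρ_j = ‖Π_{j-1}/Π_j‖_∞ < ∞`,
the kernel `Q_j` defines a bounded operator on `L²(Π_{j-1})` with
`∫ (Q_j f)² dΠ_{j-1} ≤ ρ_j² Π_{j-1}(f²)`, and `Q_j` is self-adjoint: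
`⟨f, Q_j h⟩_{j-1} = ⟨h, Q_j f⟩_{j-1}`. -/
theorem Qop_bounded_and_selfAdjoint
    {Θ : Type*} [MeasurableSpace Θ]
    (πprev πcur : Measure Θ)
    (hπprev : IsProbabilityMeasure πprev) (hπcur : IsProbabilityMeasure πcur)
    (M : Kernel Θ Θ) (hM : IsMarkovKernel M)
    (hrev : IsReversible M πcur)
    (r : Θ → ℝ) (hrmeas : Measurable r) (hrnonneg : ∀ z, 0 ≤ r z)
    (hdens : πprev = πcur.withDensity (fun z => ENNReal.ofReal (r z)))
    (ρ : ℝ) (hρ : ∀ z, r z ≤ ρ) :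
    (∀ f : Θ → ℝ, Measurable f → Integrable (fun x => (f x) ^ 2) πprev →
      Integrable (fun x => (Qop M r f x) ^ 2) πprev ∧
      (∫ x, (Qop M r f x) ^ 2 ∂πprev) ≤ ρ ^ 2 * ∫ x, (f x) ^ 2 ∂πprev) ∧
    (∀ f h : Θ → ℝ, Measurable f → Measurable h →
      Integrable (fun x => (f x) ^ 2) πprev → Integrable (fun x => (h x) ^ 2) πprev →
      (∫ x, f x * Qop M r h x ∂πprev) = ∫ x, h x * Qop M r f x ∂πprev) := by
  -- ρ is nonnegative
  have hne : Nonempty Θ := by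
    by_contra hc
    have h0 : πprev Set.univ = 0 := by
      rw [Set.univ_eq_empty_iff.2 (not_nonempty_iff.1 hc)]
      simp
    rw [measure_univ] at h0
    simp at h0
  obtain ⟨z0⟩ := hne
  have ρ0 : 0 ≤ ρ := (hrnonneg z0).trans (hρ z0)
  -- lintegral over πprev as lintegral over πcur
  have hlprev : ∀ {w : Θ → ℝ≥0∞}, Measurable w →
      ∫⁻ x, w x ∂πprev = ∫⁻ x, ENNReal.ofReal (r x) * w x ∂πcur := by
    intro w hw
    rw [hdens, lintegral_withDensity_eq_lintegral_mul πcur hrmeas.ennreal_ofReal hw]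
    rfl
  -- key bound: ∫⁻ (f·r)² dπcur ≤ ρ · ∫⁻ f² dπprev
  have hg2 : ∀ f : Θ → ℝ, Measurable f →
      ∫⁻ x, ENNReal.ofReal ((f x * r x) ^ 2) ∂πcur
        ≤ ENNReal.ofReal ρ * ∫⁻ x, ENNReal.ofReal ((f x) ^ 2) ∂πprev := by
    intro f hf
    rw [hlprev (hf.pow_const 2).ennreal_ofReal,
      ← lintegral_const_mul _ (show Measurable fun x => ENNReal.ofReal (r x) * ENNReal.ofReal (f x ^ 2) from hrmeas.ennreal_ofReal.mul (hf.pow_const 2).ennreal_ofReal)]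
    refine lintegral_mono fun x => ?_
    rw [← mul_assoc, ← ENNReal.ofReal_mul ρ0, ← ENNReal.ofReal_mul (mul_nonneg ρ0 (hrnonneg x))]
    refine ENNReal.ofReal_le_ofReal ?_
    nlinarith [sq_nonneg (f x), hrnonneg x, hρ x,
      mul_le_mul_of_nonneg_right (hρ x) (hrnonneg x)]
  have hfin : ∀ f : Θ → ℝ, Integrable (fun x => (f x) ^ 2) πprev →
      ∫⁻ x, ENNReal.ofReal ((f x) ^ 2) ∂πprev < ⊤ := by
    intro f hf2
    have := hf2.hasFiniteIntegral
    rwa [hasFiniteIntegral_iff_ofReal (Filter.Eventually.of_forall fun x => sq_nonneg _)] at this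
  constructor
  · -- boundedness
    intro f hf hf2
    set g : Θ → ℝ := fun z => f z * r z with hg_def
    have hg : Measurable g := hf.mul hrmeas
    have hTg : Measurable fun x => ∫ y, g y ∂(M x) := measurable_Tint M hg
    have hQ : Measurable (Qop M r f) := by
      have := measurable_Tint M hTg
      exact this
    have hffin := hfin f hf2
    have hQbound : ∫⁻ x, ENNReal.ofReal ((Qop M r f x) ^ 2) ∂πprev
        ≤ ENNReal.ofReal ρ ^ 2 * ∫⁻ x, ENNReal.ofReal ((f x) ^ 2) ∂πprev := by
      calc ∫⁻ x, ENNReal.ofReal ((Qop M r f x) ^ 2) ∂πprev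
          = ∫⁻ x, ENNReal.ofReal (r x) * ENNReal.ofReal ((Qop M r f x) ^ 2) ∂πcur :=
            hlprev (hQ.pow_const 2).ennreal_ofReal
        _ ≤ ∫⁻ x, ENNReal.ofReal ρ *
              (∫⁻ y, ∫⁻ z, ENNReal.ofReal ((g z) ^ 2) ∂(M y) ∂(M x)) ∂πcur := by
            refine lintegral_mono fun x => mul_le_mul' (ENNReal.ofReal_le_ofReal (hρ x)) ?_
            refine le_trans ?_ (lintegral_mono fun y => sq_integral_le (M y) hg)
            exact sq_integral_le (M x) hTg
        _ = ENNReal.ofReal ρ *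
              ∫⁻ x, (∫⁻ y, ∫⁻ z, ENNReal.ofReal ((g z) ^ 2) ∂(M y) ∂(M x)) ∂πcur :=
            lintegral_const_mul _
              (Measurable.lintegral_kernel
                (Measurable.lintegral_kernel (hg.pow_const 2).ennreal_ofReal))
        _ = ENNReal.ofReal ρ * ∫⁻ x, ENNReal.ofReal ((g x) ^ 2) ∂πcur := by
            rw [lintegral_invariant πcur M hrev
              (Measurable.lintegral_kernel (hg.pow_const 2).ennreal_ofReal),
              lintegral_invariant πcur M hrev (hg.pow_const 2).ennreal_ofReal]
        _ ≤ ENNReal.ofReal ρ *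
              (ENNReal.ofReal ρ * ∫⁻ x, ENNReal.ofReal ((f x) ^ 2) ∂πprev) :=
            mul_le_mul' le_rfl (hg2 f hf)
        _ = ENNReal.ofReal ρ ^ 2 * ∫⁻ x, ENNReal.ofReal ((f x) ^ 2) ∂πprev := by ring
    have hrhs_fin : ENNReal.ofReal ρ ^ 2 * ∫⁻ x, ENNReal.ofReal ((f x) ^ 2) ∂πprev ≠ ⊤ :=
      (ENNReal.mul_lt_top (ENNReal.pow_lt_top ENNReal.ofReal_lt_top) hffin).ne
    have hQfin : ∫⁻ x, ENNReal.ofReal ((Qop M r f x) ^ 2) ∂πprev < ⊤ :=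
      lt_of_le_of_lt hQbound (lt_top_iff_ne_top.2 hrhs_fin)
    constructor
    · refine ⟨(hQ.pow_const 2).aestronglyMeasurable, ?_⟩
      rwa [hasFiniteIntegral_iff_ofReal (Filter.Eventually.of_forall fun x => sq_nonneg _)]
    · rw [integral_eq_lintegral_of_nonneg_ae
          (Filter.Eventually.of_forall fun x => sq_nonneg _)
          (hQ.pow_const 2).aestronglyMeasurable,
        integral_eq_lintegral_of_nonneg_ae
          (Filter.Eventually.of_forall fun x => sq_nonneg _)
          (hf.pow_const 2).aestronglyMeasurable]
      have hrw : ρ ^ 2 * (∫⁻ x, ENNReal.ofReal ((f x) ^ 2) ∂πprev).toReal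
          = (ENNReal.ofReal ρ ^ 2 * ∫⁻ x, ENNReal.ofReal ((f x) ^ 2) ∂πprev).toReal := by
        rw [ENNReal.toReal_mul, ENNReal.toReal_pow, ENNReal.toReal_ofReal ρ0]
      rw [hrw]
      exact ENNReal.toReal_mono hrhs_fin hQbound
  · -- self-adjointness
    intro f h hfm hhm hf2 hh2
    set gf : Θ → ℝ := fun z => f z * r z with hgf_def
    set gh : Θ → ℝ := fun z => h z * r z with hgh_def
    have hgfm : Measurable gf := hfm.mul hrmeas
    have hghm : Measurable gh := hhm.mul hrmeas
    have hgf2 : MemLp gf 2 πcur := by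
      rw [lint_sq_lt_top_iff_memℒp hgfm]
      exact lt_of_le_of_lt (hg2 f hfm)
        (ENNReal.mul_lt_top ENNReal.ofReal_lt_top (hfin f hf2))
    have hgh2 : MemLp gh 2 πcur := by
      rw [lint_sq_lt_top_iff_memℒp hghm]
      exact lt_of_le_of_lt (hg2 h hhm)
        (ENNReal.mul_lt_top ENNReal.ofReal_lt_top (hfin h hh2))
    set Tgf : Θ → ℝ := fun y => ∫ z, gf z ∂(M y) with hTgf_def
    set Tgh : Θ → ℝ := fun y => ∫ z, gh z ∂(M y) with hTgh_def
    have hTgfm : Measurable Tgf := measurable_Tint M hgfm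
    have hTghm : Measurable Tgh := measurable_Tint M hghm
    have hTgf2 : MemLp Tgf 2 πcur := by
      rw [lint_sq_lt_top_iff_memℒp hTgfm]
      exact lt_of_le_of_lt (lint_Tsq_le πcur M hrev hgfm)
        ((lint_sq_lt_top_iff_memℒp hgfm).1 hgf2)
    have hTgh2 : MemLp Tgh 2 πcur := by
      rw [lint_sq_lt_top_iff_memℒp hTghm]
      exact lt_of_le_of_lt (lint_Tsq_le πcur M hrev hghm)
        ((lint_sq_lt_top_iff_memℒp hghm).1 hgh2)
    have hQh : ∀ x, Qop M r h x = ∫ y, Tgh y ∂(M x) := fun x => rfl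
    have hQf : ∀ x, Qop M r f x = ∫ y, Tgf y ∂(M x) := fun x => rfl
    have eL : ∫ x, f x * Qop M r h x ∂πprev = ∫ x, gf x * (∫ y, Tgh y ∂(M x)) ∂πcur := by
      rw [hdens, integral_withDensity_ofReal hrmeas hrnonneg]
      congr 1
      funext x
      rw [hQh x]
      ring
    have eR : ∫ x, h x * Qop M r f x ∂πprev = ∫ x, gh x * (∫ y, Tgf y ∂(M x)) ∂πcur := by
      rw [hdens, integral_withDensity_ofReal hrmeas hrnonneg]
      congr 1
      funext x
      rw [hQf x]
      ring
    rw [eL, eR, adj_step πcur M hrev hgfm hTghm hgf2 hTgh2,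
      adj_step πcur M hrev hghm hTgfm hgh2 hTgf2]
    simp_rw [mul_comm]
    rfl
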